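/- Let G be a finite group with a non-abelian minimal normal subgroup M. Then M is contained in the kernel of every irreducible character of G of degree 2. -/

import Mathlib

open CategoryTheory BigOperators
open scoped Classical

noncomputable section

/-- `χ` is an irreducible complex character of the finite group `G`. -/
def IsIrrChar {G : Type} [Group G] [Fintype G] (χ : G → ℂ) : Prop :=
  ∃ V : FDRep ℂ G, Simple V ∧ χ = V.character

/-- The class function on `G` induced from the function `η` on the subgroup `H`. -/
def indChar {G : Type} [Group G] [Fintype G] (H : Subgroup G) (η : H → ℂ) : G → ℂ :=
  fun g => (Fintype.card H : ℂ)⁻¹ *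
    ∑ x : G, if h : x⁻¹ * g * x ∈ H then η ⟨x⁻¹ * g * x, h⟩ else 0

/-- `χ` is monomial: induced from a linear character of some subgroup. -/
def IsMonomial {G : Type} [Group G] [Fintype G] (χ : G → ℂ) : Prop :=
  ∃ (H : Subgroup G) (η : H →* ℂ), χ = indChar H fun h => η h

/-- `χ` is primitive: not induced from an (irreducible) character of a proper subgroup. -/
def IsPrimitive {G : Type} [Group G] [Fintype G] (χ : G → ℂ) : Prop :=
  ¬ ∃ (H : Subgroup G), H ≠ ⊤ ∧ ∃ η : H → ℂ, IsIrrChar η ∧ χ = indChar H η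

/-- The usual hermitian inner product of class functions. -/
def charInner {H : Type} [Group H] [Fintype H] (α β : H → ℂ) : ℂ :=
  (Fintype.card H : ℂ)⁻¹ * ∑ h, α h * (starRingEnd ℂ) (β h)

open Module LinearMap

/-- Cayley–Hamilton for 2×2 matrices of determinant 1. -/
lemma aux_mat2_ch (A : Matrix (Fin 2) (Fin 2) ℂ) (h : A.det = 1) :
    A * A + 1 = A.trace • A := by
  rw [Matrix.det_fin_two] at h
  ext i j
  rw [Matrix.trace_fin_two]
  fin_cases i <;> fin_cases j <;>
    simp [Matrix.mul_apply, Fin.sum_univ_two, Matrix.one_apply, Matrix.smul_apply,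
      smul_eq_mul] <;>
    (first
      | linear_combination h
      | linear_combination -h
      | linear_combination 2 * h
      | linear_combination -2 * h
      | ring)

/-- Cayley–Hamilton for endomorphisms of determinant 1 of a 2-dimensional space. -/
lemma aux_ch2 {V : Type} [AddCommGroup V] [Module ℂ V] [FiniteDimensional ℂ V]
    (h2 : finrank ℂ V = 2) (f : V →ₗ[ℂ] V) (hdet : LinearMap.det f = 1) :
    f * f + 1 = (LinearMap.trace ℂ V f) • f := by
  let b : Basis (Fin 2) ℂ V := finBasisOfFinrankEq ℂ V h2
  apply (LinearMap.toMatrix b b).injective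
  rw [map_add, LinearMap.toMatrix_mul, LinearMap.toMatrix_one, map_smul,
    LinearMap.trace_eq_matrix_trace ℂ b]
  exact aux_mat2_ch _ (by rw [LinearMap.det_toMatrix]; exact hdet)

/-- A non-abelian minimal normal subgroup is in the kernel of every irreducible
character of degree 2. -/
theorem min_normal_nonabelian_in_ker_deg_two (G : Type) [Group G] [Fintype G]
    (M : Subgroup G) [M.Normal] (hM1 : M ≠ ⊥)
    (hmin : ∀ K : Subgroup G, K.Normal → K ≤ M → K = ⊥ ∨ K = M)
    (hna : ∃ a b : M, a * b ≠ b * a)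
    (χ : G → ℂ) (hχ : IsIrrChar χ) (hdeg : χ 1 = 2) :
    ∀ m ∈ M, χ m = χ 1 := by
  obtain ⟨V, hSim, rfl⟩ := hχ
  haveI : Simple V := hSim
  -- dimension 2
  have h2 : finrank ℂ V = 2 := by
    have h := FDRep.char_one V
    rw [hdeg] at h
    exact_mod_cast h.symm
  haveI hVnt : Nontrivial V := Module.finrank_pos_iff.mp (by rw [h2]; norm_num)
  obtain ⟨v₀, hv₀⟩ : ∃ v : V, v ≠ 0 := exists_ne 0
  letI : Fintype G := ‹Fintype G›
  letI : Invertible ((Nat.card G : ℂ)) :=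
    invertibleOfNonzero (Nat.cast_ne_zero.mpr Nat.card_pos.ne')
  letI invG : Invertible ((Fintype.card G : ℂ)) :=
    invertibleOfNonzero (Nat.cast_ne_zero.mpr Fintype.card_ne_zero)
  letI : Invertible ((Fintype.card G : ℂ)) := invG
  -- Schur, concretely: endomorphisms commuting with the `G`-action are scalar.
  have hdim1 : finrank ℂ (Representation.linHom V.ρ V.ρ).invariants = 1 := by
    have h1 := FDRep.average_char_eq_finrank_invariants
      (k := ℂ) (FDRep.of (Representation.linHom V.ρ V.ρ))
    have horth := FDRep.char_orthonormal (k := ℂ) (G := G) V V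
    rw [if_pos ⟨Iso.refl V⟩] at horth
    simp only [FDRep.of_ρ, FDRep.char_linHom] at h1
    have hsum : ∑ g : G, V.character g⁻¹ * V.character g
        = ∑ g : G, V.character g * V.character g⁻¹ := by
      apply Finset.sum_congr rfl; intro g _; rw [mul_comm]
    rw [hsum] at h1
    have horth' : (Nat.card G : ℂ)⁻¹ * ∑ g : G, V.character g * V.character g⁻¹
        = 1 := by exact_mod_cast horth
    rw [h1] at horth'
    exact_mod_cast horth'
  have hmem_inv : ∀ f : V →ₗ[ℂ] V, (∀ g : G, V.ρ g * f = f * V.ρ g) →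
      f ∈ (Representation.linHom V.ρ V.ρ).invariants := by
    intro f hf g
    rw [Representation.linHom_apply]
    have hinv : V.ρ g * V.ρ g⁻¹ = 1 := by rw [← map_mul, mul_inv_cancel, map_one]
    calc V.ρ g ∘ₗ f ∘ₗ V.ρ g⁻¹ = V.ρ g * f * V.ρ g⁻¹ := by
          rw [Module.End.mul_eq_comp, Module.End.mul_eq_comp, LinearMap.comp_assoc]
      _ = f * (V.ρ g * V.ρ g⁻¹) := by rw [hf g, mul_assoc]
      _ = f := by rw [hinv, mul_one]
  have hone_ne : (1 : V →ₗ[ℂ] V) ≠ 0 := by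
    intro h
    have := LinearMap.congr_fun h v₀
    simp at this
    exact hv₀ this
  have hscalar : ∀ f : V →ₗ[ℂ] V, (∀ g : G, V.ρ g * f = f * V.ρ g) →
      ∃ c : ℂ, f = c • (1 : V →ₗ[ℂ] V) := by
    intro f hf
    have hone : (1 : V →ₗ[ℂ] V) ∈ (Representation.linHom V.ρ V.ρ).invariants :=
      hmem_inv 1 (by intro g; rw [mul_one, one_mul])
    have hspan : Submodule.span ℂ {(1 : V →ₗ[ℂ] V)}
        = (Representation.linHom V.ρ V.ρ).invariants := by
      apply Submodule.eq_of_le_of_finrank_le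
      · exact Submodule.span_le.mpr (Set.singleton_subset_iff.mpr hone)
      · rw [hdim1, finrank_span_singleton hone_ne]
    have : f ∈ Submodule.span ℂ {(1 : V →ₗ[ℂ] V)} := hspan ▸ hmem_inv f hf
    obtain ⟨c, hc⟩ := Submodule.mem_span_singleton.mp this
    exact ⟨c, hc.symm⟩
  -- the kernel of ρ intersected with M
  have hmem_ker : ∀ g : G, g ∈ (Representation.asGroupHom V.ρ).ker ↔ V.ρ g = 1 := by
    intro g
    rw [MonoidHom.mem_ker, Units.ext_iff, Units.val_one, Representation.asGroupHom_apply]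
  haveI hNnorm : (M ⊓ (Representation.asGroupHom V.ρ).ker).Normal := by
    constructor
    intro x hx g
    exact ⟨‹M.Normal›.conj_mem x hx.1 g, ((Representation.asGroupHom V.ρ).normal_ker).conj_mem x hx.2 g⟩
  rcases hmin (M ⊓ (Representation.asGroupHom V.ρ).ker) hNnorm inf_le_left with hN | hN
  · -- faithful case : derive a contradiction
    exfalso
    have hFaith : ∀ x : G, x ∈ M → V.ρ x = 1 → x = 1 := by
      intro x hxM hx1
      have hx : x ∈ M ⊓ (Representation.asGroupHom V.ρ).ker := ⟨hxM, (hmem_ker x).mpr hx1⟩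
      rw [hN] at hx
      exact hx
    -- M is perfect
    have hcomm_ne : (⁅M, M⁆ : Subgroup G) ≠ ⊥ := by
      intro h
      obtain ⟨a, b, hab⟩ := hna
      have hle := Subgroup.commutator_eq_bot_iff_le_centralizer.mp h
      have hba := Subgroup.mem_centralizer_iff.mp (hle a.2) ↑b b.2
      exact hab (Subtype.ext hba.symm)
    haveI : (⁅M, M⁆ : Subgroup G).Normal := Subgroup.commutator_normal M M
    have hMM : (⁅M, M⁆ : Subgroup G) = M :=
      (hmin ⁅M, M⁆ ‹_› (Subgroup.commutator_le_left M M)).resolve_left hcomm_ne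
    have hmapTop : Subgroup.map M.subtype ⊤ = M := by
      rw [← MonoidHom.range_eq_map, Subgroup.range_subtype]
    have hMtop : (⁅(⊤ : Subgroup ↥M), ⊤⁆ : Subgroup ↥M) = ⊤ := by
      apply Subgroup.map_injective M.subtype_injective
      rw [Subgroup.map_commutator, hmapTop, hMM]
    have hperfElt : ∀ (φ : ↥M →* ℂˣ) (m : ↥M), φ m = 1 := by
      intro φ m
      have hle : (⁅(⊤ : Subgroup ↥M), ⊤⁆ : Subgroup ↥M) ≤ φ.ker := by
        rw [Subgroup.commutator_le]
        intro a _ b _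
        rw [MonoidHom.mem_ker, map_commutatorElement]
        exact commutatorElement_eq_one_iff_commute.mpr (Commute.all _ _)
      exact hle (by rw [hMtop]; exact Subgroup.mem_top m)
    -- determinant 1 on M
    have hdet : ∀ m : ↥M, LinearMap.det (V.ρ ↑m) = 1 := by
      intro m
      have h := hperfElt ((Units.map LinearMap.det).comp
        ((Representation.asGroupHom V.ρ).comp M.subtype)) m
      have h' := congrArg Units.val h
      rw [MonoidHom.comp_apply, MonoidHom.comp_apply, Units.coe_map,
        Representation.asGroupHom_apply, Units.val_one] at h'
      exact h'
    set T := LinearMap.trace ℂ V with hT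
    have hch : ∀ g : G, V.character g = T (V.ρ g) := fun g => rfl
    have hCH : ∀ m : ↥M, V.ρ ↑m * V.ρ ↑m + 1 = T (V.ρ ↑m) • V.ρ ↑m :=
      fun m => aux_ch2 h2 (V.ρ ↑m) (hdet m)
    have hρinv : ∀ m : ↥M, V.ρ ↑m * V.ρ ↑(m⁻¹) = 1 := by
      intro m
      rw [← map_mul]
      norm_cast
      rw [mul_inv_cancel, Subgroup.coe_one, map_one]
    have htr1 : T 1 = 2 := by rw [hT, LinearMap.trace_one, h2]; norm_num
    have hsum_rel : ∀ m : ↥M, V.ρ ↑m + V.ρ ↑(m⁻¹) = T (V.ρ ↑m) • 1 := by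
      intro m
      have h := congrArg (· * V.ρ ↑(m⁻¹)) (hCH m)
      simp only [add_mul, smul_mul_assoc, mul_assoc, hρinv m, mul_one, one_mul] at h
      exact h
    have htr_inv : ∀ m : ↥M, T (V.ρ ↑(m⁻¹)) = T (V.ρ ↑m) := by
      intro m
      have h := congrArg T (hsum_rel m)
      rw [map_add, map_smul, htr1, smul_eq_mul] at h
      have : T (V.ρ ↑m) + T (V.ρ ↑(m⁻¹)) = T (V.ρ ↑m) * 2 := h
      linear_combination this
    have htr_sq : ∀ m : ↥M, T (V.ρ (↑m * ↑m)) = T (V.ρ ↑m) * T (V.ρ ↑m) - 2 := by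
      intro m
      have h := congrArg T (hCH m)
      rw [map_add, map_smul, htr1, smul_eq_mul, ← map_mul] at h
      linear_combination h
    -- the restriction of ρ to M
    set ρM : Representation ℂ ↥M V := V.ρ.comp M.subtype with hρM
    letI : Invertible ((Fintype.card ↥M : ℂ)) :=
      invertibleOfNonzero (Nat.cast_ne_zero.mpr Fintype.card_ne_zero)
    letI : Invertible ((Nat.card ↥M : ℂ)) :=
      invertibleOfNonzero (Nat.cast_ne_zero.mpr Nat.card_pos.ne')
    have hcardM : (Fintype.card ↥M : ℂ) ≠ 0 := Nat.cast_ne_zero.mpr Fintype.card_ne_zero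
    have hEavg := FDRep.average_char_eq_finrank_invariants (k := ℂ) (FDRep.of ρM)
    simp only [FDRep.of_ρ] at hEavg
    have hcharM : ∀ m : ↥M, (FDRep.of ρM).character m = T (V.ρ ↑m) := fun m => rfl
    -- the averaging projector over M
    have hPexp : ρM.averageMap = ⅟(Fintype.card ↥M : ℂ) • ∑ m : ↥M, ρM m := by
      simp only [Representation.averageMap, GroupAlgebra.average, map_smul, map_sum,
        MonoidAlgebra.of_apply, Representation.asAlgebraHom_single, one_smul]
    have hPcomm : ∀ g : G, V.ρ g * ρM.averageMap = ρM.averageMap * V.ρ g := by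
      intro g
      rw [hPexp, mul_smul_comm, smul_mul_assoc]
      congr 1
      rw [Finset.mul_sum, Finset.sum_mul]
      refine Fintype.sum_equiv (MulAut.conjNormal g).toEquiv _ _ ?_
      intro m
      show V.ρ g * V.ρ ↑m = V.ρ ↑(MulAut.conjNormal g m) * V.ρ g
      rw [← map_mul, ← map_mul]
      congr 1
      rw [MulAut.conjNormal_apply]
      group
    obtain ⟨c, hPc⟩ := hscalar ρM.averageMap hPcomm
    have hProj := Representation.isProj_averageMap ρM
    have hc2 : c * c = c := by
      have h := hProj.map_id (ρM.averageMap v₀) (hProj.map_mem v₀)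
      rw [hPc] at h
      simp only [LinearMap.smul_apply, Module.End.one_apply, smul_smul] at h
      exact smul_left_injective ℂ hv₀ h
    have hc01 : c = 0 ∨ c = 1 := by
      rcases mul_eq_zero.mp (show c * (c - 1) = 0 by ring_nf; linear_combination hc2) with h | h
      · exact Or.inl h
      · exact Or.inr (by linear_combination h)
    have hc0 : c = 0 := by
      rcases hc01 with h | h
      · exact h
      · exfalso
        rw [h, one_smul] at hPc
        obtain ⟨x, hxM, hx1⟩ : ∃ x ∈ M, x ≠ 1 :=
          (Subgroup.bot_or_exists_ne_one M).resolve_left hM1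
        have hρx : V.ρ x = 1 := by
          ext w
          have hw : w ∈ ρM.invariants := by
            have h' := hProj.map_mem w
            rwa [hPc, Module.End.one_apply] at h'
          rw [Module.End.one_apply]
          exact hw ⟨x, hxM⟩
        exact hx1 (hFaith x hxM hρx)
    have hP0 : ρM.averageMap = 0 := by rw [hPc, hc0, zero_smul]
    have hinv_bot : ρM.invariants = ⊥ := by
      rw [eq_bot_iff]
      intro x hx
      have := hProj.map_id x hx
      rw [hP0] at this
      simp only [LinearMap.zero_apply] at this
      rw [Submodule.mem_bot, ← this]
    have hsum0 : ∑ m : ↥M, T (V.ρ ↑m) = 0 := by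
      have hEavg' : ⅟(Fintype.card ↥M : ℂ) • ∑ g : ↥M, (FDRep.of ρM).character g
          = ((finrank ℂ ρM.invariants : ℕ) : ℂ) := by
          rw [invOf_eq_inv, Fintype.card_eq_nat_card, smul_eq_mul]; exact hEavg
      rw [hinv_bot, finrank_bot] at hEavg'
      simp only [hcharM, Nat.cast_zero] at hEavg'
      have hEavg : (Fintype.card ↥M : ℂ)⁻¹ * ∑ m : ↥M, T (V.ρ ↑m) = 0 := by
        rw [← invOf_eq_inv, ← smul_eq_mul]; exact hEavg'
      rcases mul_eq_zero.mp hEavg with h | h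
      · exact absurd h (inv_ne_zero hcardM)
      · exact h
    -- now split on the parity of |M|
    rcases Nat.even_or_odd (Fintype.card ↥M) with hpar | hpar
    · -- even case: an involution acts as a scalar, so M has nontrivial centre
      haveI : Fact (Nat.Prime 2) := ⟨Nat.prime_two⟩
      obtain ⟨t, ht⟩ := exists_prime_orderOf_dvd_card (G := ↥M) 2 hpar.two_dvd
      have ht1 : t ≠ 1 := by
        intro h; rw [h, orderOf_one] at ht; omega
      have htt : (↑t : G) * ↑t = 1 := by
        have h : t * t = 1 := by
          have := pow_orderOf_eq_one t
          rwa [ht, pow_two] at this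
        calc (↑t : G) * ↑t = ↑(t * t) := rfl
          _ = 1 := by rw [h, Subgroup.coe_one]
      have h1 : (1 : V →ₗ[ℂ] V) + 1 = T (V.ρ ↑t) • V.ρ ↑t := by
        have h := hCH t
        rwa [← map_mul, htt, map_one] at h
      have htr0 : T (V.ρ ↑t) ≠ 0 := by
        intro h0
        rw [h0, zero_smul] at h1
        have := LinearMap.congr_fun h1 v₀
        simp only [LinearMap.add_apply, Module.End.one_apply, LinearMap.zero_apply] at this
        have h2v : (2 : ℂ) • v₀ = 0 := by rw [two_smul]; exact this
        exact hv₀ (by simpa using (smul_eq_zero.mp h2v).resolve_left (by norm_num))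
      have hscalar_t : V.ρ ↑t = ((T (V.ρ ↑t))⁻¹ * 2) • 1 := by
        have h : T (V.ρ ↑t) • V.ρ ↑t = (2 : ℂ) • 1 := by
          rw [← h1]; ext w; simp [two_smul]
        calc V.ρ ↑t = (T (V.ρ ↑t))⁻¹ • (T (V.ρ ↑t) • V.ρ ↑t) := by
              rw [inv_smul_smul₀ htr0]
          _ = (T (V.ρ ↑t))⁻¹ • ((2 : ℂ) • 1) := by rw [h]
          _ = ((T (V.ρ ↑t))⁻¹ * 2) • 1 := by rw [smul_smul]
      have hcent : ∀ x : G, x ∈ M → ↑t * x = x * ↑t := by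
        intro x hx
        have hcomm : V.ρ ↑t * V.ρ x = V.ρ x * V.ρ ↑t := by
          rw [hscalar_t, smul_mul_assoc, one_mul, mul_smul_comm, mul_one]
        have helt : (↑t * x * (↑t : G)⁻¹ * x⁻¹ : G) ∈ M :=
          mul_mem (mul_mem (mul_mem t.2 hx) (inv_mem t.2)) (inv_mem hx)
        have hρ1 : V.ρ ((↑t : G) * (↑t)⁻¹) = 1 := by rw [mul_inv_cancel, map_one]
        have hρx1 : V.ρ (x * x⁻¹) = 1 := by rw [mul_inv_cancel, map_one]
        have hρ : V.ρ (↑t * x * (↑t : G)⁻¹ * x⁻¹) = 1 := by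
          rw [map_mul, map_mul, map_mul, hcomm, mul_assoc (V.ρ x), ← map_mul, hρ1,
            mul_one, ← map_mul, hρx1]
        have h := hFaith _ helt hρ
        have h' : ↑t * x * (↑t : G)⁻¹ = x := by rwa [mul_inv_eq_one] at h
        rwa [mul_inv_eq_iff_eq_mul] at h'
      set Z := M ⊓ Subgroup.centralizer (M : Set G) with hZdef
      haveI hZn : Z.Normal := by
        constructor
        intro z hz g
        refine ⟨‹M.Normal›.conj_mem z hz.1 g, Subgroup.mem_centralizer_iff.mpr ?_⟩
        intro x hxM
        have hx' : g⁻¹ * x * g ∈ M := by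
          have := ‹M.Normal›.conj_mem x hxM g⁻¹
          rwa [inv_inv] at this
        have hzx := Subgroup.mem_centralizer_iff.mp hz.2 _ hx'
        calc x * (g * z * g⁻¹) = g * (g⁻¹ * x * g * z) * g⁻¹ := by group
          _ = g * (z * (g⁻¹ * x * g)) * g⁻¹ := by rw [hzx]
          _ = g * z * g⁻¹ * x := by group
      have hZM : Z = M := by
        refine (hmin Z hZn inf_le_left).resolve_left ?_
        intro hbot
        have htZ : (↑t : G) ∈ Z := by
          refine ⟨t.2, Subgroup.mem_centralizer_iff.mpr fun x hx => (hcent x hx).symm⟩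
        rw [hbot, Subgroup.mem_bot] at htZ
        exact ht1 (Subtype.ext htZ)
      obtain ⟨a, b, hab⟩ := hna
      have haZ : (↑a : G) ∈ Z := by rw [hZM]; exact a.2
      have hba := Subgroup.mem_centralizer_iff.mp haZ.2 ↑b b.2
      exact hab (Subtype.ext hba.symm)
    · -- odd case: squaring is a bijection, so `End_M(V)` is 2-dimensional
      have hcop : (Nat.card ↥M).Coprime 2 := by
        rw [Nat.card_eq_fintype_card, Nat.coprime_comm]
        exact (Nat.prime_two.coprime_iff_not_dvd).mpr
          (Nat.two_dvd_ne_zero.mpr (Nat.odd_iff.mp hpar))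
      have hsqsum : ∑ m : ↥M, T (V.ρ (↑m * ↑m)) = 0 := by
        have h := Equiv.sum_comp (powCoprime hcop) (fun x : ↥M => T (V.ρ ↑x))
        have h2' : ∀ m : ↥M, T (V.ρ (↑m * ↑m))
            = (fun x : ↥M => T (V.ρ ↑x)) (powCoprime hcop m) := by
          intro m
          simp only [powCoprime_apply, pow_two]
          rfl
        calc ∑ m : ↥M, T (V.ρ (↑m * ↑m))
            = ∑ m : ↥M, (fun x : ↥M => T (V.ρ ↑x)) (powCoprime hcop m) :=
              Finset.sum_congr rfl fun m _ => h2' m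
          _ = ∑ m : ↥M, T (V.ρ ↑m) := h
          _ = 0 := hsum0
      have hC2avg := FDRep.average_char_eq_finrank_invariants
        (k := ℂ) (FDRep.of (Representation.linHom ρM ρM))
      have hchar2 : ∀ m : ↥M,
          (FDRep.of (Representation.linHom ρM ρM)).character m
            = T (V.ρ ↑(m⁻¹)) * T (V.ρ ↑m) := by
        intro m
        exact FDRep.char_linHom (FDRep.of ρM) (FDRep.of ρM) m
      have hA2 : finrank ℂ (Representation.linHom ρM ρM).invariants = 2 := by
        have hC2avg' : ⅟(Fintype.card ↥M : ℂ)
              • ∑ m : ↥M, (FDRep.of (Representation.linHom ρM ρM)).character m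
            = ((finrank ℂ (Representation.linHom ρM ρM).invariants : ℕ) : ℂ) := by
              rw [invOf_eq_inv, Fintype.card_eq_nat_card, smul_eq_mul]; exact hC2avg
        clear hC2avg
        have hC2avg := hC2avg'
        rw [Finset.sum_congr rfl (fun m _ => hchar2 m)] at hC2avg
        have hsum2 : ∑ m : ↥M, T (V.ρ ↑(m⁻¹)) * T (V.ρ ↑m)
            = (Fintype.card ↥M : ℂ) * 2 := by
          have : ∀ m : ↥M, T (V.ρ ↑(m⁻¹)) * T (V.ρ ↑m) = T (V.ρ (↑m * ↑m)) + 2 := by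
            intro m
            rw [htr_inv m, htr_sq m]
            ring
          rw [Finset.sum_congr rfl fun m _ => this m, Finset.sum_add_distrib, hsqsum,
            zero_add, Finset.sum_const, Finset.card_univ, nsmul_eq_mul]
        rw [hsum2, invOf_eq_inv, smul_eq_mul, ← mul_assoc, inv_mul_cancel₀ hcardM,
          one_mul] at hC2avg
        exact_mod_cast hC2avg.symm
      -- find a nonscalar endomorphism commuting with `M`
      have h1A : (1 : V →ₗ[ℂ] V) ∈ (Representation.linHom ρM ρM).invariants := by
        intro m
        rw [Representation.linHom_apply]
        have : ρM m * ((1 : V →ₗ[ℂ] V) * ρM m⁻¹) = 1 := by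
          rw [one_mul, ← map_mul, mul_inv_cancel, map_one]
        calc ρM m ∘ₗ (1 : V →ₗ[ℂ] V) ∘ₗ ρM m⁻¹
            = ρM m * ((1 : V →ₗ[ℂ] V) * ρM m⁻¹) := rfl
          _ = 1 := this
      obtain ⟨f, hfA, hfns⟩ : ∃ f : V →ₗ[ℂ] V,
          f ∈ (Representation.linHom ρM ρM).invariants
            ∧ f ∉ Submodule.span ℂ {(1 : V →ₗ[ℂ] V)} := by
        by_contra h
        push_neg at h
        have hle : (Representation.linHom ρM ρM).invariants
            ≤ Submodule.span ℂ {(1 : V →ₗ[ℂ] V)} := h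
        have := Submodule.finrank_mono hle
        rw [hA2, finrank_span_singleton hone_ne] at this
        omega
      have hfcomm : ∀ m : ↥M, V.ρ ↑m * f = f * V.ρ ↑m := by
        intro m
        have h := hfA m
        rw [Representation.linHom_apply] at h
        have h' : ρM m * (f * ρM m⁻¹) = f := h
        have hinv2 : ρM m⁻¹ * ρM m = 1 := by rw [← map_mul, inv_mul_cancel, map_one]
        have := congrArg (· * ρM m) h'
        simp only [mul_assoc, hinv2, mul_one] at this
        exact this
      obtain ⟨μ, hμ⟩ := Module.End.exists_eigenvalue (f : Module.End ℂ V)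
      obtain ⟨v, hv⟩ := hμ.exists_hasEigenvector
      have hv0 : v ≠ 0 := hv.right
      have hfv : f v = μ • v := hv.apply_eq_smul
      set E := Module.End.eigenspace (f : Module.End ℂ V) μ with hEdef
      have hvE : v ∈ E := hv.left
      have hEne : E ≠ ⊤ := by
        intro h
        apply hfns
        have hfeq : f = μ • (1 : V →ₗ[ℂ] V) := by
          ext w
          have hw : w ∈ E := h ▸ Submodule.mem_top
          rw [Module.End.mem_eigenspace_iff] at hw
          simpa using hw
        rw [hfeq]
        exact Submodule.smul_mem _ μ (Submodule.mem_span_singleton_self _)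
      have hE1 : finrank ℂ E = 1 := by
        have hlt : finrank ℂ E < 2 := h2 ▸ Submodule.finrank_lt hEne
        have hge : 1 ≤ finrank ℂ E := by
          have := Submodule.finrank_mono
            (Submodule.span_le.mpr (Set.singleton_subset_iff.mpr hvE))
          rwa [finrank_span_singleton hv0] at this
        omega
      have hspanE : Submodule.span ℂ {v} = E := by
        apply Submodule.eq_of_le_of_finrank_le
        · exact Submodule.span_le.mpr (Set.singleton_subset_iff.mpr hvE)
        · rw [hE1, finrank_span_singleton hv0]
      have hstab : ∀ m : ↥M, ∃ c : ℂ, V.ρ ↑m v = c • v := by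
        intro m
        have hmemE : V.ρ ↑m v ∈ E := by
          rw [Module.End.mem_eigenspace_iff]
          have hcm := LinearMap.congr_fun (hfcomm m) v
          simp only [Module.End.mul_apply] at hcm
          calc f (V.ρ ↑m v) = V.ρ ↑m (f v) := by rw [← hcm]
            _ = V.ρ ↑m (μ • v) := by rw [hfv]
            _ = μ • V.ρ ↑m v := by rw [map_smul]
        rw [← hspanE] at hmemE
        obtain ⟨c, hc⟩ := Submodule.mem_span_singleton.mp hmemE
        exact ⟨c, hc.symm⟩
      choose cc hcc using hstab
      have happly : ∀ (a : ↥M) (w : V), V.ρ ↑a (V.ρ ↑(a⁻¹) w) = w := by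
        intro a w
        rw [← Module.End.mul_apply, hρinv a, Module.End.one_apply]
      have hcc_unit : ∀ m : ↥M, cc m * cc m⁻¹ = 1 := by
        intro m
        have h := happly m v
        rw [hcc m⁻¹, map_smul, hcc m, smul_smul] at h
        have := smul_left_injective ℂ hv0 (show (cc m⁻¹ * cc m) • v = (1 : ℂ) • v by
          rw [h, one_smul])
        rw [mul_comm] at this
        exact this
      let TS : Subgroup ↥M :=
        { carrier := {m : ↥M | V.ρ ↑m v = v}
          one_mem' := by
            show V.ρ ((1 : ↥M) : G) v = v
            rw [Subgroup.coe_one, map_one, Module.End.one_apply]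
          mul_mem' := by
            intro a b ha hb
            show V.ρ ((a * b : ↥M) : G) v = v
            have : ((a * b : ↥M) : G) = ↑a * ↑b := rfl
            rw [this, map_mul, Module.End.mul_apply, hb, ha]
          inv_mem' := by
            intro a ha
            show V.ρ ((a⁻¹ : ↥M) : G) v = v
            have ha' : V.ρ ↑a v = v := ha
            rw [hcc a] at ha'
            have hca : cc a = 1 := smul_left_injective ℂ hv0 (show cc a • v = (1:ℂ) • v by
              rw [ha', one_smul])
            have hca' : cc a⁻¹ = 1 := by
              have := hcc_unit a
              rw [hca, one_mul] at this
              exact this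
            rw [hcc a⁻¹, hca', one_smul] }
      have hccmul : ∀ a b : ↥M, cc (a * b) = cc a * cc b := by
        intro a b
        have hab : V.ρ (↑(a * b) : G) v = (cc a * cc b) • v := by
          have hco : ((a * b : ↥M) : G) = ↑a * ↑b := rfl
          rw [hco, map_mul, Module.End.mul_apply, hcc b, map_smul, hcc a, smul_smul,
            mul_comm (cc b)]
        exact smul_left_injective ℂ hv0 (show cc (a * b) • v = (cc a * cc b) • v by
          rw [← hcc (a * b), hab])
      have hTtop : TS = ⊤ := by
        rw [eq_top_iff, ← hMtop, Subgroup.commutator_le]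
        intro a _ b _
        letI : Bracket ↥M ↥M := commutatorElement
        show V.ρ ↑(⁅a, b⁆ : ↥M) v = v
        have hc1 : cc ⁅a, b⁆ = 1 := by
          rw [commutatorElement_def, hccmul, hccmul, hccmul]
          calc cc a * cc b * cc a⁻¹ * cc b⁻¹
              = (cc a * cc a⁻¹) * (cc b * cc b⁻¹) := by ring
            _ = 1 := by rw [hcc_unit a, hcc_unit b, one_mul]
        rw [hcc ⁅a, b⁆, hc1, one_smul]
      have hvinv : v ∈ ρM.invariants := by
        intro m
        have hm : m ∈ TS := hTtop ▸ Subgroup.mem_top m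
        exact hm
      rw [hinv_bot] at hvinv
      exact hv0 hvinv
  · -- M acts trivially
    intro m hm
    rw [← hN] at hm
    have hρm : V.ρ m = 1 := (hmem_ker m).mp hm.2
    show LinearMap.trace ℂ V (V.ρ m) = V.character 1
    rw [hρm, FDRep.char_one, LinearMap.trace_one]
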